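/- Let X be a real-valued random variable whose probability density function is a corner density f : I → [0,∞), and suppose its differential entropy h(X) = -∫_I f ln(f) dx exists. Then h(X) ≥ 1 + E[ln X], i.e., -∫_I f(x) ln(f(x)) dx ≥ 1 + ∫_I f(x) ln(x) dx. -/

import Mathlib

open MeasureTheory Set Filter Topology


lemma corner_seq (J : Set ℝ) (hJ : J = Set.Ioi 0 ∨ ∃ b : ℝ, 0 < b ∧ J = Set.Ioo 0 b) :
    ∃ a t : ℕ → ℝ, (∀ n, 0 < a n) ∧ (∀ n, a n ≤ t n) ∧ (∀ n, Set.Icc (a n) (t n) ⊆ J) ∧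
      Antitone a ∧ Monotone t ∧ (∀ x ∈ J, ∃ n, a n < x ∧ x ≤ t n) := by
  rcases hJ with rfl | ⟨b, hb, rfl⟩
  · refine ⟨fun n => ((n : ℝ) + 2)⁻¹, fun n => (n : ℝ) + 1, fun n => by positivity, ?_, ?_, ?_, ?_, ?_⟩
    · intro n
      have h1 : ((n : ℝ) + 2)⁻¹ ≤ 1 := by
        rw [inv_le_one_iff₀]; right; linarith [Nat.cast_nonneg (α := ℝ) n]
      linarith [Nat.cast_nonneg (α := ℝ) n]
    · intro n x hx
      exact lt_of_lt_of_le (by positivity) hx.1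
    · intro m n hmn
      apply inv_anti₀ (by positivity)
      have : (m : ℝ) ≤ n := Nat.cast_le.2 hmn
      linarith
    · intro m n hmn
      dsimp only
      have : (m : ℝ) ≤ n := Nat.cast_le.2 hmn
      linarith
    · intro x hx
      have hx' : (0 : ℝ) < x := hx
      obtain ⟨n, hn⟩ := exists_nat_gt (max x⁻¹ x)
      refine ⟨n, ?_, ?_⟩
      · have h1 : x⁻¹ < n := lt_of_le_of_lt (le_max_left _ _) hn
        have h2 : x⁻¹ < (n : ℝ) + 2 := by linarith
        calc ((n : ℝ) + 2)⁻¹ < (x⁻¹)⁻¹ := by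
              apply inv_strictAnti₀ (by positivity) h2
          _ = x := inv_inv x
      · dsimp only
        have := lt_of_le_of_lt (le_max_right x⁻¹ x) hn
        linarith
  · refine ⟨fun n => b / ((n : ℝ) + 3), fun n => b - b / ((n : ℝ) + 3), fun n => by positivity,
      ?_, ?_, ?_, ?_, ?_⟩
    · intro n
      have h3 : (3 : ℝ) ≤ (n : ℝ) + 3 := by linarith [Nat.cast_nonneg (α := ℝ) n]
      have : b / ((n : ℝ) + 3) ≤ b / 3 := by
        apply div_le_div_of_nonneg_left hb.le (by norm_num) h3
      linarith
    · intro n x hx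
      have h0 : 0 < b / ((n : ℝ) + 3) := by positivity
      constructor
      · exact lt_of_lt_of_le h0 hx.1
      · exact lt_of_le_of_lt hx.2 (by linarith)
    · intro m n hmn
      have : (m : ℝ) ≤ n := Nat.cast_le.2 hmn
      apply div_le_div_of_nonneg_left hb.le (by positivity) (by linarith)
    · intro m n hmn
      have : (m : ℝ) ≤ n := Nat.cast_le.2 hmn
      have : b / ((n : ℝ) + 3) ≤ b / ((m : ℝ) + 3) :=
        div_le_div_of_nonneg_left hb.le (by positivity) (by linarith)
      linarith
    · intro x hx
      obtain ⟨hx0, hxb⟩ := hx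
      obtain ⟨n, hn⟩ := exists_nat_gt (b / min x (b - x))
      have hmin : 0 < min x (b - x) := lt_min hx0 (by linarith)
      have hkey : b / ((n : ℝ) + 3) < min x (b - x) := by
        rw [div_lt_iff₀ (by positivity)]
        rw [div_lt_iff₀ hmin] at hn
        nlinarith [hmin]
      refine ⟨n, lt_of_lt_of_le hkey (min_le_left _ _), ?_⟩
      have := lt_of_lt_of_le hkey (min_le_right _ _)
      linarith

theorem corner_main (f : ℝ → ℝ) (J : Set ℝ)
    (hJ : J = Set.Ioi 0 ∨ ∃ b : ℝ, 0 < b ∧ J = Set.Ioo 0 b)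
    (hpos : ∀ x ∈ J, 0 ≤ f x) (hanti : AntitoneOn f J)
    (hfint : IntegrableOn f J) (hint1 : (∫ x in J, f x) = 1)
    (h_ent : IntegrableOn (fun x => f x * Real.log (f x)) J)
    (h_log : IntegrableOn (fun x => f x * Real.log x) J) :
    (-∫ x in J, f x * Real.log (f x)) ≥ 1 + ∫ x in J, f x * Real.log x := by
  have hJmeas : MeasurableSet J := by
    rcases hJ with rfl | ⟨b, _, rfl⟩
    exacts [measurableSet_Ioi, measurableSet_Ioo]
  have hJsub : J ⊆ Set.Ioi 0 := by
    rcases hJ with rfl | ⟨b, _, rfl⟩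
    exacts [le_rfl, Set.Ioo_subset_Ioi_self]
  have hJIoc : ∀ x ∈ J, Set.Ioc 0 x ⊆ J := by
    rcases hJ with rfl | ⟨b, _, rfl⟩
    · exact fun x hx t ht => ht.1
    · exact fun x hx t ht => ⟨ht.1, lt_of_le_of_lt ht.2 hx.2⟩
  -- the indicator function and the CDF
  set f₀ : ℝ → ℝ := J.indicator f with hf₀def
  have hf₀int : Integrable f₀ := (integrable_indicator_iff hJmeas).2 hfint
  have hf₀nn : ∀ x, 0 ≤ f₀ x := fun x => Set.indicator_nonneg hpos x
  set F : ℝ → ℝ := fun x => ∫ t in Set.Iic x, f₀ t with hFdef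
  have hF_eq : ∀ x, F x = ∫ t in J ∩ Set.Iic x, f t := by
    intro x
    rw [hFdef]
    simp only
    rw [integral_indicator hJmeas, Measure.restrict_restrict hJmeas]
  have hf₀tot : (∫ x, f₀ x) = 1 := by
    rw [hf₀def, integral_indicator hJmeas]; exact hint1
  have hFmono : Monotone F := by
    intro x y hxy
    exact setIntegral_mono_set hf₀int.integrableOn
      (Eventually.of_forall hf₀nn) (HasSubset.Subset.eventuallyLE (Set.Iic_subset_Iic.2 hxy))
  have hF1 : ∀ x, F x ≤ 1 := by
    intro x
    rw [← hf₀tot]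
    rw [← setIntegral_univ (f := f₀)]
    exact setIntegral_mono_set hf₀int.integrableOn
      (Eventually.of_forall hf₀nn) (HasSubset.Subset.eventuallyLE (Set.subset_univ _))
  have hFnn : ∀ x, 0 ≤ F x := by
    intro x
    exact setIntegral_nonneg measurableSet_Iic fun t _ => hf₀nn t
  have hkey : ∀ x ∈ J, x * f x ≤ F x := by
    intro x hx
    have hx0 : 0 < x := hJsub hx
    have h1 : Set.Ioc 0 x ⊆ J := hJIoc x hx
    have h2 : (∫ t in Set.Ioc 0 x, f t) ≤ F x := by
      rw [hF_eq x]
      refine setIntegral_mono_set (hfint.mono_set Set.inter_subset_left)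
        ?_ (HasSubset.Subset.eventuallyLE fun t ht => ⟨h1 ht, ht.2⟩)
      filter_upwards [ae_restrict_mem (hJmeas.inter measurableSet_Iic)] with t ht
      exact hpos t ht.1
    refine le_trans ?_ h2
    have h3 : (∫ t in Set.Ioc 0 x, (fun _ => f x) t) ≤ ∫ t in Set.Ioc 0 x, f t := by
      refine setIntegral_mono_on (integrableOn_const (by simp [hx0]))
        (hfint.mono_set h1) measurableSet_Ioc ?_
      intro t ht
      exact hanti (h1 ht) hx ht.2
    calc x * f x = (volume (Set.Ioc (0:ℝ) x)).toReal • f x := by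
          simp [Real.volume_Ioc, hx0.le, smul_eq_mul]
      _ = ∫ t in Set.Ioc 0 x, (fun _ => f x) t := (setIntegral_const _).symm
      _ ≤ _ := h3
  have hsplit : ∀ x : ℝ, F x + (∫ t in J ∩ Set.Ioi x, f t) = 1 := by
    intro x
    rw [hF_eq x, ← hint1]
    rw [← setIntegral_union (by
        exact ((Set.Iic_disjoint_Ioi le_rfl).mono
          Set.inter_subset_right Set.inter_subset_right))
      (hJmeas.inter measurableSet_Ioi) (hfint.mono_set Set.inter_subset_left)
      (hfint.mono_set Set.inter_subset_left)]
    congr 1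
    rw [← Set.inter_union_distrib_left, Set.Iic_union_Ioi, Set.inter_univ]
  have hFpos : ∀ x ∈ J, 0 < F x := by
    intro x hx
    rcases eq_or_lt_of_le (hpos x hx) with hfx | hfx
    · have htail : (∫ t in J ∩ Set.Ioi x, f t) = 0 := by
        rw [setIntegral_congr_fun (hJmeas.inter measurableSet_Ioi)
          (g := fun _ => (0:ℝ)) ?_]
        · simp
        · intro t ht
          exact le_antisymm (hfx ▸ hanti hx ht.1 (le_of_lt ht.2)) (hpos t ht.1)
      have := hsplit x
      rw [htail, add_zero] at this
      rw [this]; norm_num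
    · calc (0:ℝ) < x * f x := mul_pos (hJsub hx) hfx
        _ ≤ F x := hkey x hx
  have hFrepr : F = fun x => F 0 + ∫ t in (0:ℝ)..x, f₀ t := by
    funext x
    rw [← intervalIntegral.integral_Iic_sub_Iic hf₀int.integrableOn hf₀int.integrableOn]
    ring
  have hFcont : Continuous F := by
    rw [hFrepr]
    exact continuous_const.add (intervalIntegral.continuous_primitive
      (fun a b => hf₀int.intervalIntegrable) 0)
  set g₀ : ℝ → ℝ := fun x => Real.log (F x) * f₀ x with hg₀def
  have hg₀meas : AEStronglyMeasurable g₀ volume :=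
    ((Real.measurable_log.comp hFcont.measurable).aestronglyMeasurable.mul
      hf₀int.aestronglyMeasurable)
  have hg₀le : ∀ x, g₀ x ≤ 0 := by
    intro x
    exact mul_nonpos_iff.2 (Or.inr ⟨Real.log_nonpos (hFnn x) (hF1 x), hf₀nn x⟩)
  have hg₀ge : ∀ x ∈ J, f x * Real.log (f x) + f x * Real.log x ≤ g₀ x := by
    intro x hx
    have hx0 : 0 < x := hJsub hx
    have hfx0 : f₀ x = f x := Set.indicator_of_mem hx f
    rcases eq_or_lt_of_le (hpos x hx) with hfx | hfx
    · rw [hg₀def]; simp only [hfx0, ← hfx]; simp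
    · rw [hg₀def]
      simp only [hfx0]
      rw [← mul_add, ← Real.log_mul (ne_of_gt hfx) (ne_of_gt hx0), mul_comm (Real.log (F x))]
      apply mul_le_mul_of_nonneg_left _ (hpos x hx)
      apply Real.log_le_log (by positivity)
      calc f x * x = x * f x := mul_comm _ _
        _ ≤ F x := hkey x hx
  have hg₀int : IntegrableOn g₀ J := by
    refine Integrable.mono ((h_ent.add h_log) :) hg₀meas.restrict ?_
    filter_upwards [ae_restrict_mem hJmeas] with x hx
    rw [Real.norm_eq_abs, Real.norm_eq_abs, abs_of_nonpos (hg₀le x)]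
    refine le_trans (neg_le_neg (hg₀ge x hx)) (neg_le_abs _)
  obtain ⟨a, t, ha0, hat, hIccJ, hamono, htmono, hcover⟩ := corner_seq J hJ
  set s : Set ℝ := ⋃ n, {x | ¬ContinuousAt (fun y => f (min (max y (a n)) (t n))) x} with hsdef
  have hscount : s.Countable := by
    refine Set.countable_iUnion fun n => ?_
    refine Antitone.countable_not_continuousAt ?_
    intro x y hxy
    have hx' : min (max x (a n)) (t n) ∈ Set.Icc (a n) (t n) :=
      ⟨le_min (le_max_right _ _) (hat n), min_le_right _ _⟩
    have hy' : min (max y (a n)) (t n) ∈ Set.Icc (a n) (t n) :=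
      ⟨le_min (le_max_right _ _) (hat n), min_le_right _ _⟩
    exact hanti (hIccJ n hx') (hIccJ n hy')
      (min_le_min (max_le_max hxy le_rfl) le_rfl)
  have hcontf₀ : ∀ n, ∀ x ∈ Set.Ioo (a n) (t n) \ s, ContinuousAt f₀ x := by
    intro n x hx
    obtain ⟨hx1, hx2⟩ := hx
    have hxn : ContinuousAt (fun y => f (min (max y (a n)) (t n))) x := by
      by_contra h
      exact hx2 (Set.mem_iUnion.2 ⟨n, h⟩)
    apply hxn.congr
    filter_upwards [isOpen_Ioo.mem_nhds hx1] with y hy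
    have hyJ : y ∈ J := hIccJ n (Set.Ioo_subset_Icc_self hy)
    rw [max_eq_left hy.1.le, min_eq_left hy.2.le]
    exact (Set.indicator_of_mem hyJ f).symm
  have hFTC : ∀ n, (∫ x in Set.Ioc (a n) (t n), g₀ x) =
      (F (t n) * Real.log (F (t n)) - F (t n)) -
        (F (a n) * Real.log (F (a n)) - F (a n)) := by
    intro n
    have hle := hat n
    have hintg : IntervalIntegrable g₀ volume (a n) (t n) := by
      rw [intervalIntegrable_iff_integrableOn_Ioc_of_le hle]
      exact hg₀int.mono_set fun x hx => hIccJ n ⟨le_of_lt hx.1, hx.2⟩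
    have hmain := integral_eq_of_hasDerivAt_off_countable_of_le
      (fun x => F x * Real.log (F x) - F x) g₀ hle hscount
      (((Real.continuous_mul_log.comp hFcont).sub hFcont).continuousOn) ?_ hintg
    · rw [← hmain, intervalIntegral.integral_of_le hle]
    · intro x hx
      obtain ⟨hx1, hx2⟩ := hx
      have hxJ : x ∈ J := hIccJ n (Set.Ioo_subset_Icc_self hx1)
      have hcf : ContinuousAt f₀ x := hcontf₀ n x ⟨hx1, hx2⟩
      have hFd : HasDerivAt F (f₀ x) x := by
        have h0 : HasDerivAt (fun u => ∫ s in (0:ℝ)..u, f₀ s) (f₀ x) x :=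
          intervalIntegral.integral_hasDerivAt_right hf₀int.intervalIntegrable
            ⟨Set.univ, Filter.univ_mem, hf₀int.aestronglyMeasurable.restrict⟩ hcf
        rw [hFrepr]
        exact h0.const_add (F 0)
      have hphi : HasDerivAt (fun u => u * Real.log u - u) (Real.log (F x)) (F x) := by
        have h1 := (Real.hasDerivAt_mul_log (ne_of_gt (hFpos x hxJ))).sub (hasDerivAt_id (F x))
        exact h1.congr_deriv (by ring)
      have h2 := hphi.comp x hFd
      exact h2
  have hFt : Tendsto (fun n => F (t n)) atTop (𝓝 1) := by
    have h1 := tendsto_setIntegral_of_monotone (μ := volume) (f := f)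
      (s := fun n => J ∩ Set.Iic (t n)) (fun n => hJmeas.inter measurableSet_Iic)
      (fun m n hmn => Set.inter_subset_inter_right _ (Set.Iic_subset_Iic.2 (htmono hmn)))
      (hfint.mono_set (Set.iUnion_subset fun n => Set.inter_subset_left))
    have hU : (⋃ n, J ∩ Set.Iic (t n)) = J := by
      refine Set.Subset.antisymm (Set.iUnion_subset fun n => Set.inter_subset_left) ?_
      intro x hx
      obtain ⟨n, _, hn2⟩ := hcover x hx
      exact Set.mem_iUnion.2 ⟨n, hx, hn2⟩
    rw [hU, hint1] at h1
    exact h1.congr fun n => (hF_eq (t n)).symm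
  have hFa : Tendsto (fun n => F (a n)) atTop (𝓝 0) := by
    have h1 := tendsto_setIntegral_of_monotone (μ := volume) (f := f)
      (s := fun n => J ∩ Set.Ioi (a n)) (fun n => hJmeas.inter measurableSet_Ioi)
      (fun m n hmn => Set.inter_subset_inter_right _ fun x hx => lt_of_le_of_lt (hamono hmn) hx)
      (hfint.mono_set (Set.iUnion_subset fun n => Set.inter_subset_left))
    have hU : (⋃ n, J ∩ Set.Ioi (a n)) = J := by
      refine Set.Subset.antisymm (Set.iUnion_subset fun n => Set.inter_subset_left) ?_
      intro x hx
      obtain ⟨n, hn1, _⟩ := hcover x hx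
      exact Set.mem_iUnion.2 ⟨n, hx, hn1⟩
    rw [hU, hint1] at h1
    have heq : (fun n => F (a n)) = fun n => 1 - ∫ x in J ∩ Set.Ioi (a n), f x :=
      funext fun n => by linarith [hsplit (a n)]
    rw [heq]
    have h2 := (tendsto_const_nhds (x := (1:ℝ))).sub h1
    simpa using h2
  have hG : Tendsto (fun n => ∫ x in Set.Ioc (a n) (t n), g₀ x) atTop (𝓝 (-1)) := by
    have hphi : Continuous fun u : ℝ => u * Real.log u - u :=
      Real.continuous_mul_log.sub continuous_id
    have c1 := (hphi.continuousAt (x := (1:ℝ))).tendsto.comp hFt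
    have c2 := (hphi.continuousAt (x := (0:ℝ))).tendsto.comp hFa
    have h3 := c1.sub c2
    have h4 : Tendsto (fun n => (F (t n) * Real.log (F (t n)) - F (t n)) -
        (F (a n) * Real.log (F (a n)) - F (a n))) atTop (𝓝 (-1)) := by
      have hval : ((fun u : ℝ => u * Real.log u - u) 1 - (fun u : ℝ => u * Real.log u - u) 0)
          = (-1 : ℝ) := by norm_num
      rw [hval] at h3
      exact h3
    exact Tendsto.congr (fun n => (hFTC n).symm) h4
  have hJint : Tendsto (fun n => ∫ x in Set.Ioc (a n) (t n), g₀ x) atTop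
      (𝓝 (∫ x in J, g₀ x)) := by
    have hU : (⋃ n, Set.Ioc (a n) (t n)) = J := by
      refine Set.Subset.antisymm (Set.iUnion_subset fun n =>
        fun x hx => hIccJ n ⟨le_of_lt hx.1, hx.2⟩) ?_
      intro x hx
      obtain ⟨n, hn1, hn2⟩ := hcover x hx
      exact Set.mem_iUnion.2 ⟨n, hn1, hn2⟩
    have h1 := tendsto_setIntegral_of_monotone (μ := volume) (f := g₀)
      (s := fun n => Set.Ioc (a n) (t n)) (fun n => measurableSet_Ioc)
      (fun m n hmn => Set.Ioc_subset_Ioc (hamono hmn) (htmono hmn)) (hU ▸ hg₀int)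
    rwa [hU] at h1
  have hg₀val : (∫ x in J, g₀ x) = -1 := tendsto_nhds_unique hJint hG
  have hmono2 : (∫ x in J, (f x * Real.log (f x) + f x * Real.log x)) ≤ ∫ x in J, g₀ x :=
    setIntegral_mono_on (h_ent.add h_log) hg₀int hJmeas fun x hx => hg₀ge x hx
  rw [integral_add h_ent h_log, hg₀val] at hmono2
  linarith

/-- A corner density: `I ∪ {0}` is a connected interval contained in `[0,∞)`,
`f` is nonnegative and monotone decreasing on `I`, and `∫_I f = 1`. -/
def IsCornerDensity (I : Set ℝ) (f : ℝ → ℝ) : Prop :=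
  I ⊆ Set.Ici 0 ∧ (I ∪ {0}).OrdConnected ∧ (∀ x ∈ I, 0 ≤ f x) ∧
    AntitoneOn f I ∧ (∫ x in I, f x) = 1

/-- If a random variable `X` has a corner density `f : I → [0,∞)` and
its differential entropy `h(X) = -∫_I f ln f` exists, then `h(X) ≥ 1 + E[ln X]`, i.e.
`-∫_I f(x) ln(f(x)) dx ≥ 1 + ∫_I f(x) ln(x) dx`. -/
theorem differentialEntropy_ge_one_add_expected_log (I : Set ℝ) (f : ℝ → ℝ)
    (hf : IsCornerDensity I f)
    (h_ent : IntegrableOn (fun x => f x * Real.log (f x)) I)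
    (h_log : IntegrableOn (fun x => f x * Real.log x) I) :
    (-∫ x in I, f x * Real.log (f x)) ≥ 1 + ∫ x in I, f x * Real.log x := by
  obtain ⟨hI0, hconn, hpos, hanti, hint1⟩ := hf
  have hfint : IntegrableOn f I := by
    by_contra h
    rw [integral_undef h] at hint1
    exact one_ne_zero hint1.symm
  have hsub1 : ∀ y ∈ I, Set.Ioo 0 y ⊆ I := by
    intro y hy z hz
    have h1 : z ∈ I ∪ {0} :=
      hconn.out (Set.mem_union_right _ rfl) (Set.mem_union_left _ hy) ⟨hz.1.le, hz.2.le⟩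
    rcases h1 with h | h
    · exact h
    · exact absurd h (by simpa using ne_of_gt hz.1)
  have hex : ∃ y ∈ I, 0 < y := by
    by_contra h
    push_neg at h
    have hnull : volume I = 0 := by
      refine measure_mono_null (fun x hx => ?_) ((Real.volume_singleton (a := (0:ℝ))))
      simpa using le_antisymm (h x hx) (hI0 hx)
    rw [Measure.restrict_eq_zero.2 hnull, integral_zero_measure] at hint1
    exact one_ne_zero hint1.symm
  obtain ⟨y₀, hy₀I, hy₀⟩ := hex
  obtain ⟨J, hJ, hJI, hae⟩ : ∃ J : Set ℝ,
      (J = Set.Ioi 0 ∨ ∃ b : ℝ, 0 < b ∧ J = Set.Ioo 0 b) ∧ J ⊆ I ∧ I =ᵐ[volume] J := by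
    by_cases hbdd : BddAbove I
    · set b := sSup I with hbdef
      have hb : 0 < b := lt_of_lt_of_le hy₀ (le_csSup hbdd hy₀I)
      have hJI : Set.Ioo 0 b ⊆ I := by
        intro z hz
        obtain ⟨y, hyI, hzy⟩ := exists_lt_of_lt_csSup ⟨y₀, hy₀I⟩ hz.2
        exact hsub1 y hyI ⟨hz.1, hzy⟩
      refine ⟨Set.Ioo 0 b, Or.inr ⟨b, hb, rfl⟩, hJI, ?_⟩
      rw [ae_eq_set]
      constructor
      · refine measure_mono_null (fun x hx => ?_)
          (((Set.finite_singleton b).insert 0).measure_zero volume)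
        obtain ⟨hxI, hxn⟩ := hx
        simp only [Set.mem_insert_iff, Set.mem_singleton_iff]
        by_contra hc
        push_neg at hc
        refine hxn ⟨lt_of_le_of_ne (hI0 hxI) (Ne.symm hc.1), ?_⟩
        exact lt_of_le_of_ne (le_csSup hbdd hxI) hc.2
      · rw [Set.diff_eq_empty.2 hJI, measure_empty]
    · have hJI : Set.Ioi 0 ⊆ I := by
        intro z hz
        obtain ⟨y, hyI, hzy⟩ := not_bddAbove_iff.1 hbdd z
        exact hsub1 y hyI ⟨hz, hzy⟩
      refine ⟨Set.Ioi 0, Or.inl rfl, hJI, ?_⟩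
      rw [ae_eq_set]
      constructor
      · refine measure_mono_null (fun x hx => ?_) ((Real.volume_singleton (a := (0:ℝ))))
        obtain ⟨hxI, hxn⟩ := hx
        simpa using le_antisymm (not_lt.1 hxn) (hI0 hxI)
      · rw [Set.diff_eq_empty.2 hJI, measure_empty]
  rw [setIntegral_congr_set hae, setIntegral_congr_set hae]
  exact corner_main f J hJ (fun x hx => hpos x (hJI hx)) (hanti.mono hJI)
    (hfint.mono_set hJI) (by rw [← setIntegral_congr_set hae]; exact hint1)
    (h_ent.mono_set hJI) (h_log.mono_set hJI)
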